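/- Let s > 0, let D ⊆ ℝ² be a bounded set containing at least N ≥ 1 points of the square lattice L_s = {(s·(p + 1/2), s·(q + 1/2)) : p, q ∈ ℤ}, and suppose there exist L ≥ 0 and a map γ : ℝ → ℝ² that is 1-Lipschitz on [0, L] with frontier(D) ⊆ γ '' [0, L]. Then L ≥ s·(√N − 1). -/

import Mathlib

open MeasureTheory Metric Set ENNReal

noncomputable section

/-- The plane `ℝ²` with the Euclidean metric. -/
abbrev Plane := EuclideanSpace ℝ (Fin 2)

/-- The square lattice of spacing `s`, offset by half a spacing in each coordinate:
`L_s = {(s(p + 1/2), s(q + 1/2)) : p, q ∈ ℤ}`. -/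
def latticePts (s : ℝ) : Set Plane :=
  {x | ∃ p q : ℤ, x 0 = s * ((p : ℝ) + 1 / 2) ∧ x 1 = s * ((q : ℝ) + 1 / 2)}

/-- A ray from a point of a bounded set hits the frontier. -/
lemma ray_hits_frontier {E : Type*} [NormedAddCommGroup E] [NormedSpace ℝ E]
    {D : Set E} (hbd : Bornology.IsBounded D) {a : E} (ha : a ∈ D)
    {u : E} (hu : ‖u‖ = 1) : ∃ t : ℝ, 0 ≤ t ∧ a + t • u ∈ frontier D := by
  obtain ⟨R, hR⟩ := hbd.subset_closedBall a
  set T : ℝ := max R 0 + 1 with hT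
  have hT0 : 0 ≤ T := by positivity
  have hcl : closure D ⊆ closedBall a R :=
    closure_minimal hR isClosed_closedBall
  have hc : a + T • u ∉ closure D := by
    intro h
    have := hcl h
    rw [mem_closedBall, dist_eq_norm] at this
    simp only [add_sub_cancel_left, norm_smul, Real.norm_eq_abs, hu, mul_one,
      abs_of_nonneg hT0] at this
    have : T ≤ max R 0 := this.trans (le_max_left R 0)
    linarith
  by_contra h
  push_neg at h
  set K : Set E := (fun t : ℝ => a + t • u) '' Icc 0 T with hK
  have hKpc : IsPreconnected K :=
    isPreconnected_Icc.image _ (Continuous.continuousOn (by continuity))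
  have hsub : K ⊆ interior D ∪ (closure D)ᶜ := by
    rintro x ⟨t, ht, rfl⟩
    by_cases hx : a + t • u ∈ closure D
    · left
      have hfr := h t ht.1
      rw [frontier, mem_diff] at hfr
      push_neg at hfr
      exact hfr hx
    · exact Or.inr hx
  have haK : a ∈ K := ⟨0, ⟨le_refl 0, hT0⟩, by simp⟩
  have hcK : a + T • u ∈ K := ⟨T, ⟨hT0, le_refl T⟩, rfl⟩
  have hKu : (K ∩ interior D).Nonempty := by
    refine ⟨a, haK, ?_⟩
    have h0 := h 0 le_rfl
    simp only [zero_smul, add_zero] at h0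
    rw [frontier, mem_diff] at h0
    push_neg at h0
    exact h0 (subset_closure ha)
  have hKv : (K ∩ (closure D)ᶜ).Nonempty := ⟨a + T • u, hcK, hc⟩
  obtain ⟨x, -, hx1, hx2⟩ := hKpc (interior D) (closure D)ᶜ isOpen_interior
    isClosed_closure.isOpen_compl hsub hKu hKv
  exact hx2 (subset_closure (interior_subset hx1))

/-- Two points of a bounded planar set yield two frontier points at least as far apart. -/
lemma exists_frontier_pair {D : Set Plane} (hbd : Bornology.IsBounded D)
    {a b : Plane} (ha : a ∈ D) (hb : b ∈ D) :
    ∃ p ∈ frontier D, ∃ q ∈ frontier D, dist a b ≤ dist p q := by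
  rcases eq_or_ne a b with rfl | hab
  · have hu : ‖(EuclideanSpace.single 0 (1:ℝ) : Plane)‖ = 1 := by
      simp [EuclideanSpace.norm_single]
    obtain ⟨t, -, hp⟩ := ray_hits_frontier hbd ha hu
    exact ⟨_, hp, _, hp, by simp⟩
  · set d : ℝ := dist a b with hd
    have hd0 : 0 < d := dist_pos.2 hab
    set u : Plane := d⁻¹ • (a - b) with hu
    have hun : ‖u‖ = 1 := by
      rw [hu, norm_smul, norm_inv, Real.norm_eq_abs, abs_of_pos hd0, ← dist_eq_norm, ← hd]
      field_simp
    have hnu : ‖-u‖ = 1 := by rwa [norm_neg]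
    obtain ⟨t₁, ht₁, hp⟩ := ray_hits_frontier hbd ha hun
    obtain ⟨t₂, ht₂, hq⟩ := ray_hits_frontier hbd hb hnu
    refine ⟨_, hp, _, hq, ?_⟩
    have hab' : a - b = d • u := by
      rw [hu, smul_smul]
      field_simp
      rw [one_smul]
    have : (a + t₁ • u) - (b + t₂ • (-u)) = (d + t₁ + t₂) • u := by
      have h1 : a + t₁ • u - (b + t₂ • (-u)) = (a - b) + (t₁ + t₂) • u := by
        module
      rw [h1, hab', ← add_smul]
      ring_nf
    rw [dist_eq_norm, this, norm_smul, Real.norm_eq_abs, hun, mul_one,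
      abs_of_nonneg (by linarith)]
    linarith

lemma coord_dist_le (x y : Plane) (i : Fin 2) : |x i - y i| ≤ dist x y := by
  rw [EuclideanSpace.dist_eq]
  have h1 : |x i - y i| = Real.sqrt (dist (x i) (y i) ^ 2) := by
    rw [Real.sqrt_sq_eq_abs, Real.dist_eq, abs_abs]
  rw [h1]
  apply Real.sqrt_le_sqrt
  exact Finset.single_le_sum (f := fun j => dist (x j) (y j) ^ 2)
    (fun j _ => sq_nonneg _) (Finset.mem_univ i)

lemma floor_of_lattice {s : ℝ} (hs : 0 < s) {r : ℝ} {p : ℤ}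
    (h : r = s * ((p : ℝ) + 1 / 2)) : ⌊r / s⌋ = p := by
  have : r / s = (p : ℝ) + 1 / 2 := by
    rw [h]; field_simp
  rw [this, add_comm, Int.floor_add_intCast]
  norm_num

/-- **Perimeter lower bound.** If a bounded set `D ⊆ ℝ²` contains at least `N ≥ 1` points
of the square lattice of spacing `s > 0` and `frontier D` is covered by a curve
parametrized by a map that is `1`-Lipschitz on `[0, L]`, then `L ≥ s(√N − 1)`. -/
theorem perimeter_ge_of_lattice_points (s : ℝ) (hs : 0 < s) (D : Set Plane)
    (hbd : Bornology.IsBounded D) (N : ℕ) (hN : 1 ≤ N)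
    (hpts : N ≤ (D ∩ latticePts s).ncard) (L : ℝ) (hL : 0 ≤ L) (γ : ℝ → Plane)
    (hγ : LipschitzOnWith 1 γ (Set.Icc 0 L)) (hfr : frontier D ⊆ γ '' Set.Icc 0 L) :
    s * (Real.sqrt (N : ℝ) - 1) ≤ L := by
  set S := D ∩ latticePts s with hS
  have hfin : S.Finite := by
    by_contra h
    rw [Set.Infinite.ncard h] at hpts; omega
  have hne : S.Nonempty := by
    apply Set.nonempty_of_ncard_ne_zero; omega
  have hdist : ∀ x ∈ S, ∀ y ∈ S, dist x y ≤ L := by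
    intro x hx y hy
    obtain ⟨p, hp, q, hq, hle⟩ := exists_frontier_pair hbd hx.1 hy.1
    obtain ⟨t₁, ht₁, rfl⟩ := hfr hp
    obtain ⟨t₂, ht₂, rfl⟩ := hfr hq
    have h1 := hγ.dist_le_mul t₁ ht₁ t₂ ht₂
    have h2 : dist t₁ t₂ ≤ L := by
      rw [Real.dist_eq, abs_sub_le_iff]
      obtain ⟨h3, h4⟩ := ht₁; obtain ⟨h5, h6⟩ := ht₂
      constructor <;> linarith
    calc dist x y ≤ dist (γ t₁) (γ t₂) := hle
      _ ≤ 1 * dist t₁ t₂ := by simpa using h1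
      _ ≤ L := by simpa using h2
  set k : ℤ := ⌊L / s⌋ with hk
  have hk0 : 0 ≤ k := Int.floor_nonneg.2 (by positivity)
  set f : Plane → ℤ × ℤ := fun x => (⌊x 0 / s⌋, ⌊x 1 / s⌋) with hf
  set F := hfin.toFinset with hF
  have hmemF : ∀ x, x ∈ F ↔ x ∈ S := fun x => hfin.mem_toFinset
  have hFne : F.Nonempty := by
    obtain ⟨x, hx⟩ := hne; exact ⟨x, (hmemF x).2 hx⟩
  set FP := F.image (fun x => ⌊x 0 / s⌋) with hFP
  set FQ := F.image (fun x => ⌊x 1 / s⌋) with hFQ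
  set pmin := FP.min' (hFne.image _) with hpmin
  set qmin := FQ.min' (hFne.image _) with hqmin
  -- helper for the second coordinate bounds
  have key : ∀ x ∈ F, ∀ y ∈ F, ⌊x 0 / s⌋ - ⌊y 0 / s⌋ ≤ k ∧ ⌊x 1 / s⌋ - ⌊y 1 / s⌋ ≤ k := by
    intro x hx y hy
    have hxS := (hmemF x).1 hx
    have hyS := (hmemF y).1 hy
    obtain ⟨px, qx, hx0, hx1⟩ := hxS.2
    obtain ⟨py, qy, hy0, hy1⟩ := hyS.2
    have hdxy := hdist x hxS y hyS
    have hb : ∀ (i : Fin 2) (a b : ℤ), x i = s * ((a:ℝ) + 1/2) → y i = s * ((b:ℝ) + 1/2) →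
        a - b ≤ k := by
      intro i a b hxa hyb
      rw [hk, Int.le_floor]
      have h1 : s * ((a : ℝ) - b) = x i - y i := by rw [hxa, hyb]; ring
      have h2 : x i - y i ≤ |x i - y i| := le_abs_self _
      have h3 := (coord_dist_le x y i).trans hdxy
      have h4 : s * ((a : ℝ) - b) ≤ L := by rw [h1]; linarith
      rw [div_eq_mul_inv, ← mul_le_mul_iff_right₀ hs]
      push_cast
      calc s * ((a:ℝ) - b) ≤ L := h4
        _ = s * (L * s⁻¹) := by field_simp
    constructor
    · rw [floor_of_lattice hs hx0, floor_of_lattice hs hy0]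
      exact hb 0 px py hx0 hy0
    · rw [floor_of_lattice hs hx1, floor_of_lattice hs hy1]
      exact hb 1 qx qy hx1 hy1
  have hmem : ∀ x ∈ F, f x ∈ Finset.Icc (pmin, qmin) (pmin + k, qmin + k) := by
    intro x hx
    rw [Finset.mem_Icc]
    obtain ⟨yp, hyp, hyp'⟩ := Finset.mem_image.1 (FP.min'_mem (hFne.image _))
    obtain ⟨yq, hyq, hyq'⟩ := Finset.mem_image.1 (FQ.min'_mem (hFne.image _))
    constructor
    · constructor
      · exact FP.min'_le _ (Finset.mem_image_of_mem _ hx)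
      · exact FQ.min'_le _ (Finset.mem_image_of_mem _ hx)
    · constructor
      · have := (key x hx yp hyp).1
        simp only [hf]
        rw [← hpmin] at hyp'
        omega
      · have := (key x hx yq hyq).2
        simp only [hf]
        rw [← hqmin] at hyq'
        omega
  have hinj : Set.InjOn f F := by
    intro x hx y hy hxy
    have hxS := (hmemF x).1 hx
    have hyS := (hmemF y).1 hy
    obtain ⟨px, qx, hx0, hx1⟩ := hxS.2
    obtain ⟨py, qy, hy0, hy1⟩ := hyS.2
    have h1 : px = py := by
      have := congrArg Prod.fst hxy
      simpa [hf, floor_of_lattice hs hx0, floor_of_lattice hs hy0] using this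
    have h2 : qx = qy := by
      have := congrArg Prod.snd hxy
      simpa [hf, floor_of_lattice hs hx1, floor_of_lattice hs hy1] using this
    have e0 : x 0 = y 0 := by rw [hx0, hy0, h1]
    have e1 : x 1 = y 1 := by rw [hx1, hy1, h2]
    ext i
    fin_cases i
    · exact e0
    · exact e1
  have hcard : F.card ≤ ((k + 1).toNat) ^ 2 := by
    have h1 := Finset.card_le_card_of_injOn f hmem hinj
    rwa [Finset.card_Icc_prod, Int.card_Icc, Int.card_Icc,
      show pmin + k + 1 - pmin = k + 1 by ring, show qmin + k + 1 - qmin = k + 1 by ring,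
      ← sq] at h1
  have hNcard : N ≤ ((k + 1).toNat) ^ 2 := by
    have : S.ncard = F.card := Set.ncard_eq_toFinset_card S hfin
    omega
  have hcast : (((k + 1).toNat : ℝ)) = (k : ℝ) + 1 := by
    have h := Int.toNat_of_nonneg (show (0:ℤ) ≤ k + 1 by omega)
    exact_mod_cast congrArg (fun z : ℤ => (z : ℝ)) h
  have hsq : (N : ℝ) ≤ ((k : ℝ) + 1) ^ 2 := by
    calc (N : ℝ) ≤ (((k + 1).toNat : ℕ) : ℝ) ^ 2 := by exact_mod_cast hNcard
      _ = ((k : ℝ) + 1) ^ 2 := by rw [hcast]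
  have hsqrt : Real.sqrt (N : ℝ) ≤ (k : ℝ) + 1 := by
    calc Real.sqrt (N : ℝ) ≤ Real.sqrt (((k : ℝ) + 1) ^ 2) := Real.sqrt_le_sqrt hsq
      _ = (k : ℝ) + 1 := Real.sqrt_sq (by exact_mod_cast hk0.trans (by omega))
  have hkL : (k : ℝ) ≤ L / s := Int.floor_le _
  have h1 : Real.sqrt (N : ℝ) - 1 ≤ L / s := by linarith
  calc s * (Real.sqrt (N : ℝ) - 1) ≤ s * (L / s) := by
        exact mul_le_mul_of_nonneg_left h1 hs.le
    _ = L := by field_simp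


end
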